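/- Let (φ_j)_{j≥1} be a sequence of k-algebra automorphisms of R = k⟦x₁,…,xₙ⟧ and (c_j)_{j≥1} a sequence of integers with c_j ≥ 2 for all j and c_j → ∞, such that φ_j(xᵢ) − xᵢ ∈ m^{c_j} for all 1 ≤ i ≤ n and all j ≥ 1. Then for every h ∈ R the sequence (φ_j∘⋯∘φ₁(h))_{j≥1} converges in the m-adic topology, and the map ψ : R → R defined by ψ(h) = lim_{j→∞} φ_j∘⋯∘φ₁(h) is a k-algebra automorphism of R. -/

import Mathlib

noncomputable section

open MvPowerSeries

/-- The maximal ideal of `k⟦x₁,…,xₙ⟧`: series with zero constant term. -/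
def mIdeal (k : Type*) [CommRing k] (n : ℕ) : Ideal (MvPowerSeries (Fin n) k) :=
  RingHom.ker (MvPowerSeries.constantCoeff : MvPowerSeries (Fin n) k →+* k)

/-- The composite `φ_j ∘ ⋯ ∘ φ_0` of a sequence of algebra automorphisms. -/
def comps {k : Type*} [Field k] {n : ℕ}
    (φ : ℕ → (MvPowerSeries (Fin n) k ≃ₐ[k] MvPowerSeries (Fin n) k)) :
    ℕ → MvPowerSeries (Fin n) k → MvPowerSeries (Fin n) k
  | 0 => φ 0
  | j + 1 => fun h => φ (j + 1) (comps φ j h)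

namespace Stmt3Aux

theorem degree_add' {σ : Type*} (p q : σ →₀ ℕ) :
    (p + q).degree = p.degree + q.degree := by
  simp only [Finsupp.degree_eq_weight_one, map_add]

theorem degree_single' {σ : Type*} (i : σ) :
    (Finsupp.single i 1 : σ →₀ ℕ).degree = 1 := by
  classical
  exact Finsupp.degree_single i 1

variable (k : Type*) [Field k] (n : ℕ)

/-- Series whose coefficients vanish in degrees `< N`. -/
def idl (N : ℕ) : Ideal (MvPowerSeries (Fin n) k) where
  carrier := {f | ∀ d : Fin n →₀ ℕ, d.degree < N → MvPowerSeries.coeff d f = 0}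
  zero_mem' := fun d _ => by simp
  add_mem' := fun {f g} hf hg d hd => by simp [map_add, hf d hd, hg d hd]
  smul_mem' := fun c f hf d hd => by
    rw [smul_eq_mul, MvPowerSeries.coeff_mul]
    apply Finset.sum_eq_zero
    rintro ⟨p, q⟩ hpq
    rw [Finset.HasAntidiagonal.mem_antidiagonal] at hpq
    have hq : q.degree < N := by
      have : p.degree + q.degree = d.degree := by rw [← degree_add', hpq]
      omega
    rw [hf q hq, mul_zero]

variable {k n}

theorem mem_idl {N : ℕ} {f : MvPowerSeries (Fin n) k} :
    f ∈ idl k n N ↔ ∀ d : Fin n →₀ ℕ, d.degree < N → MvPowerSeries.coeff d f = 0 :=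
  Iff.rfl

theorem mul_mem_idl {a b : ℕ} {f g : MvPowerSeries (Fin n) k}
    (hf : f ∈ idl k n a) (hg : g ∈ idl k n b) : f * g ∈ idl k n (a + b) := by
  intro d hd
  rw [MvPowerSeries.coeff_mul]
  apply Finset.sum_eq_zero
  rintro ⟨p, q⟩ hpq
  rw [Finset.HasAntidiagonal.mem_antidiagonal] at hpq
  have hsum : p.degree + q.degree = d.degree := by rw [← degree_add', hpq]
  rcases lt_or_ge p.degree a with h | h
  · rw [hf p h, zero_mul]
  · rw [hg q (by omega), mul_zero]

theorem pow_le_idl (N : ℕ) : mIdeal k n ^ N ≤ idl k n N := by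
  induction N with
  | zero => intro f _ d hd; exact absurd hd (Nat.not_lt_zero _)
  | succ N ih =>
    rw [pow_succ]
    refine Ideal.mul_le.mpr fun r hr s hs => ?_
    have hs1 : s ∈ idl k n 1 := by
      intro d hd
      have : d = 0 := by rwa [Nat.lt_one_iff, Finsupp.degree_eq_zero_iff] at hd
      subst this
      simpa [MvPowerSeries.coeff_zero_eq_constantCoeff] using (RingHom.mem_ker.mp hs)
    exact mul_mem_idl (ih hr) hs1

theorem eq_of_forall_sub_mem {f g : MvPowerSeries (Fin n) k}
    (h : ∀ N', f - g ∈ mIdeal k n ^ N') : f = g := by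
  ext d
  have := pow_le_idl (d.degree + 1) (h (d.degree + 1)) d (by omega)
  rw [map_sub, sub_eq_zero] at this
  exact this

theorem exists_decomp (N : ℕ) (f : MvPowerSeries (Fin n) k)
    (hf : ∀ d : Fin n →₀ ℕ, d.degree < N + 1 → MvPowerSeries.coeff d f = 0) :
    ∃ g : Fin n → MvPowerSeries (Fin n) k,
      (∀ i, ∀ d' : Fin n →₀ ℕ, d'.degree < N → MvPowerSeries.coeff d' (g i) = 0) ∧
      f = ∑ i : Fin n, X i * g i := by
  classical
  set g : Fin n → MvPowerSeries (Fin n) k := fun i d' =>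
    if (d' + Finsupp.single i 1).support.min = (↑i : WithBot (Fin n)) then
      MvPowerSeries.coeff (d' + Finsupp.single i 1) f else 0 with hg
  have coeff_g : ∀ i d', MvPowerSeries.coeff d' (g i) =
      if (d' + Finsupp.single i 1).support.min = (↑i : WithBot (Fin n)) then
        MvPowerSeries.coeff (d' + Finsupp.single i 1) f else 0 := fun i d' => rfl
  refine ⟨g, ?_, ?_⟩
  · intro i d' hd'
    rw [coeff_g]
    split_ifs with h
    · apply hf
      rw [degree_add', degree_single']
      omega
    · rfl
  · ext d
    rw [map_sum]
    have coeff_term : ∀ i : Fin n, MvPowerSeries.coeff d (X i * g i) =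
        if Finsupp.single i 1 ≤ d then MvPowerSeries.coeff (d - Finsupp.single i 1) (g i)
        else 0 := by
      intro i
      rw [show (X i : MvPowerSeries (Fin n) k) = monomial (Finsupp.single i 1) 1 from rfl,
        MvPowerSeries.coeff_monomial_mul]
      split_ifs <;> simp
    rcases eq_or_ne d 0 with rfl | hd
    · rw [hf 0 (by simp [map_zero])]
      symm
      apply Finset.sum_eq_zero
      intro i _
      rw [coeff_term, if_neg]
      simp [Finsupp.single_le_iff]
    · have hne : d.support.Nonempty := Finsupp.support_nonempty_iff.mpr hd
      obtain ⟨i₀, hi₀⟩ := Finset.min_of_nonempty hne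
      have hi₀mem : i₀ ∈ d.support := Finset.mem_of_min hi₀
      have hle : Finsupp.single i₀ 1 ≤ d := by
        rw [Finsupp.single_le_iff]
        have := Finsupp.mem_support_iff.mp hi₀mem
        omega
      rw [Finset.sum_eq_single i₀]
      · rw [coeff_term, if_pos hle, coeff_g, tsub_add_cancel_of_le hle, hi₀]
        exact (if_pos rfl).symm
      · intro i _ hne'
        rw [coeff_term]
        split_ifs with h
        · rw [coeff_g, tsub_add_cancel_of_le h, if_neg]
          rw [hi₀]
          exact fun hc => hne' (WithBot.coe_inj.mp hc.symm)
        · rfl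
      · intro h; exact absurd (Finset.mem_univ i₀) h

theorem idl_le_pow (N : ℕ) : idl k n N ≤ mIdeal k n ^ N := by
  induction N with
  | zero => intro f _; simp
  | succ N ih =>
    intro f hf
    obtain ⟨g, hg, hfg⟩ := exists_decomp N f hf
    rw [hfg, pow_succ']
    apply Ideal.sum_mem
    intro i _
    refine Ideal.mul_mem_mul ?_ (ih (hg i))
    show MvPowerSeries.constantCoeff (X i : MvPowerSeries (Fin n) k) = 0
    exact MvPowerSeries.constantCoeff_X i

/-! ### Automorphism lemmas -/

theorem aut_mem_mIdeal (σ : MvPowerSeries (Fin n) k ≃ₐ[k] MvPowerSeries (Fin n) k)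
    {b : MvPowerSeries (Fin n) k} (hb : b ∈ mIdeal k n) : σ b ∈ mIdeal k n := by
  have hb0 : MvPowerSeries.constantCoeff b = 0 := hb
  show MvPowerSeries.constantCoeff (σ b) = 0
  by_contra h
  have h1 : IsUnit (σ b) := isUnit_iff_constantCoeff.mpr (isUnit_iff_ne_zero.mpr h)
  have h2 : IsUnit b := by
    have := h1.map σ.symm.toAlgHom
    simpa using this
  have h3 : IsUnit (MvPowerSeries.constantCoeff b) :=
    isUnit_iff_constantCoeff.mp h2
  rw [hb0] at h3
  exact not_isUnit_zero h3

theorem aut_pow (σ : MvPowerSeries (Fin n) k ≃ₐ[k] MvPowerSeries (Fin n) k) (N : ℕ) :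
    ∀ f ∈ mIdeal k n ^ N, σ f ∈ mIdeal k n ^ N := by
  induction N with
  | zero => intro f _; simp
  | succ N ih =>
    intro f hf
    rw [pow_succ] at hf ⊢
    refine Submodule.mul_induction_on hf (fun a ha b hb => ?_) (fun x y hx hy => ?_)
    · rw [map_mul]
      exact Ideal.mul_mem_mul (ih a ha) (aut_mem_mIdeal σ hb)
    · rw [map_add]
      exact add_mem hx hy

theorem exists_poly_approx (C : ℕ) (f : MvPowerSeries (Fin n) k) :
    ∃ P : MvPolynomial (Fin n) k, f - ↑P ∈ idl k n C := by
  classical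
  set bd : Fin n →₀ ℕ := Finsupp.equivFunOnFinite.symm (fun _ => C) with hbd
  set S : Finset (Fin n →₀ ℕ) := (Finset.Iic bd).filter (fun d => d.degree < C) with hS
  refine ⟨∑ d ∈ S, MvPolynomial.monomial d (MvPowerSeries.coeff d f), ?_⟩
  intro e he
  rw [map_sub, sub_eq_zero, MvPolynomial.coeff_coe, MvPolynomial.coeff_sum]
  have hmem : e ∈ S := by
    rw [hS, Finset.mem_filter, Finset.mem_Iic]
    refine ⟨?_, he⟩
    intro i
    have h1 : e i ≤ e.degree := Finsupp.le_degree i e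
    have : bd i = C := rfl
    omega
  rw [Finset.sum_eq_single e]
  · simp [MvPolynomial.coeff_monomial]
  · intro d _ hne
    simp [MvPolynomial.coeff_monomial, hne]
  · intro h; exact absurd hmem h

theorem aut_sub (σ : MvPowerSeries (Fin n) k ≃ₐ[k] MvPowerSeries (Fin n) k) (C : ℕ)
    (hX : ∀ i, σ (X i) - X i ∈ mIdeal k n ^ C) (f : MvPowerSeries (Fin n) k) :
    σ f - f ∈ mIdeal k n ^ C := by
  have hpoly : ∀ P : MvPolynomial (Fin n) k,
      σ ↑P - (↑P : MvPowerSeries (Fin n) k) ∈ mIdeal k n ^ C := by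
    intro P
    induction P using MvPolynomial.induction_on with
    | C a =>
      rw [MvPolynomial.coe_C, MvPowerSeries.c_eq_algebraMap, σ.commutes, sub_self]
      exact zero_mem _
    | add p q hp hq =>
      rw [MvPolynomial.coe_add, map_add]
      have : σ ↑p + σ ↑q - ((↑p : MvPowerSeries (Fin n) k) + ↑q)
          = (σ ↑p - ↑p) + (σ ↑q - ↑q) := by ring
      rw [this]
      exact add_mem hp hq
    | mul_X p i hp =>
      rw [MvPolynomial.coe_mul, MvPolynomial.coe_X, map_mul]
      have hrw : σ ↑p * σ (X i) - (↑p : MvPowerSeries (Fin n) k) * X i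
          = σ ↑p * (σ (X i) - X i)
            + (σ (↑p : MvPowerSeries (Fin n) k) - (↑p : MvPowerSeries (Fin n) k)) * X i := by
        ring
      rw [hrw]
      exact add_mem (Ideal.mul_mem_left _ _ (hX i)) (Ideal.mul_mem_right _ _ hp)
  obtain ⟨P, hP⟩ := exists_poly_approx C f
  have h1 : f - ↑P ∈ mIdeal k n ^ C := idl_le_pow C hP
  have h2 : σ (f - ↑P) ∈ mIdeal k n ^ C := aut_pow σ C _ h1
  have hrw : σ f - f = σ (f - ↑P) + (σ ↑P - ↑P) - (f - ↑P) := by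
    rw [map_sub]; ring
  rw [hrw]
  exact sub_mem (add_mem h2 (hpoly P)) h1

/-! ### Composites as automorphisms -/

def compAut (φ : ℕ → (MvPowerSeries (Fin n) k ≃ₐ[k] MvPowerSeries (Fin n) k)) :
    ℕ → (MvPowerSeries (Fin n) k ≃ₐ[k] MvPowerSeries (Fin n) k)
  | 0 => φ 0
  | j + 1 => (compAut φ j).trans (φ (j + 1))

theorem comps_eq (φ : ℕ → (MvPowerSeries (Fin n) k ≃ₐ[k] MvPowerSeries (Fin n) k)) :
    ∀ j h, comps φ j h = compAut φ j h
  | 0, h => rfl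
  | j + 1, h => by
    show φ (j + 1) (comps φ j h) = (compAut φ j).trans (φ (j + 1)) h
    rw [comps_eq φ j h]
    rfl

/-! ### Limits -/

theorem limit (c : ℕ → ℕ) (T : ℕ → MvPowerSeries (Fin n) k → MvPowerSeries (Fin n) k)
    (hT : ∀ j h, T (j + 1) h - T j h ∈ mIdeal k n ^ c (j + 1))
    (Jf : ℕ → ℕ) (hJf : ∀ N j, Jf N ≤ j → N ≤ c j) :
    ∃ L : MvPowerSeries (Fin n) k → MvPowerSeries (Fin n) k,
      ∀ N j, Jf N ≤ j → ∀ h, T j h - L h ∈ mIdeal k n ^ N := by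
  have chain : ∀ N j, Jf N ≤ j → ∀ l h, T (j + l) h - T j h ∈ mIdeal k n ^ N := by
    intro N j hj l h
    induction l with
    | zero => simpa using zero_mem (mIdeal k n ^ N)
    | succ l ih =>
      have h1 : T (j + l + 1) h - T (j + l) h ∈ mIdeal k n ^ N :=
        Ideal.pow_le_pow_right (hJf N (j + l + 1) (by omega)) (hT (j + l) h)
      have hrw : T (j + (l + 1)) h - T j h
          = (T (j + l + 1) h - T (j + l) h) + (T (j + l) h - T j h) := by
        rw [show j + (l + 1) = j + l + 1 from rfl]; ring
      rw [hrw]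
      exact add_mem h1 ih
  refine ⟨fun h => fun d => MvPowerSeries.coeff d (T (Jf (d.degree + 1)) h), ?_⟩
  intro N j hj h
  apply idl_le_pow
  intro d hd
  erw [map_sub]
  have hL : MvPowerSeries.coeff d ((fun h => fun d =>
      MvPowerSeries.coeff d (T (Jf (d.degree + 1)) h)) h)
      = MvPowerSeries.coeff d (T (Jf (d.degree + 1)) h) := rfl
  set j' := max j (Jf (d.degree + 1)) with hj'
  have e1 : MvPowerSeries.coeff d (T j h) = MvPowerSeries.coeff d (T j' h) := by
    have h1 := chain N j hj (j' - j) h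
    rw [Nat.add_sub_cancel' (le_max_left _ _)] at h1
    have h2 := pow_le_idl N h1 d hd
    rw [map_sub, sub_eq_zero] at h2
    exact h2.symm
  have e2 : MvPowerSeries.coeff d (T (Jf (d.degree + 1)) h)
      = MvPowerSeries.coeff d (T j' h) := by
    have h1 := chain (d.degree + 1) (Jf (d.degree + 1)) le_rfl (j' - Jf (d.degree + 1)) h
    rw [Nat.add_sub_cancel' (le_max_right _ _)] at h1
    have h2 := pow_le_idl (d.degree + 1) h1 d (by omega)
    rw [map_sub, sub_eq_zero] at h2
    exact h2.symm
  rw [hL, e1, e2, sub_self]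

end Stmt3Aux

open Stmt3Aux in
/-- Let `(φ_j)` be a sequence of `k`-algebra automorphisms of `R = k⟦x₁,…,xₙ⟧` and `(c_j)` a
sequence of integers with `c_j ≥ 2` and `c_j → ∞`, such that `φ_j(xᵢ) − xᵢ ∈ m^{c_j}` for all
`i, j`.  Then for every `h ∈ R` the sequence `(φ_j ∘ ⋯ ∘ φ_0)(h)` converges in the `m`-adic
topology, and the limit map `ψ` is a `k`-algebra automorphism of `R`. -/
theorem stmt3 {k : Type*} [Field k] {n : ℕ}
    (φ : ℕ → (MvPowerSeries (Fin n) k ≃ₐ[k] MvPowerSeries (Fin n) k))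
    (c : ℕ → ℕ) (hc2 : ∀ j, 2 ≤ c j) (hc : Filter.Tendsto c Filter.atTop Filter.atTop)
    (hφ : ∀ j, ∀ i : Fin n, φ j (X i) - X i ∈ mIdeal k n ^ c j) :
    ∃ ψ : MvPowerSeries (Fin n) k ≃ₐ[k] MvPowerSeries (Fin n) k,
      ∀ h : MvPowerSeries (Fin n) k, ∀ N : ℕ, ∃ J : ℕ, ∀ j ≥ J,
        comps φ j h - ψ h ∈ mIdeal k n ^ N := by
  classical
  have hJf0 : ∀ N : ℕ, ∃ J, ∀ j ≥ J, N ≤ c j := fun N =>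
    Filter.eventually_atTop.mp (hc.eventually_ge_atTop N)
  choose Jf hJf using hJf0
  set A := compAut φ with hA
  have hAsucc : ∀ j (h : MvPowerSeries (Fin n) k), A (j + 1) h = φ (j + 1) (A j h) :=
    fun j h => rfl
  have hstepX : ∀ j g, (φ j) g - g ∈ mIdeal k n ^ c j := fun j =>
    aut_sub (φ j) (c j) (hφ j)
  have hstep : ∀ j h, A (j + 1) h - A j h ∈ mIdeal k n ^ c (j + 1) := fun j h => by
    rw [hAsucc]
    exact hstepX (j + 1) (A j h)
  obtain ⟨L, hL⟩ := limit c (fun j => ⇑(A j)) hstep Jf (fun N j hj => hJf N j hj)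
  -- the inverse maps
  have hstepX' : ∀ j g, (φ j).symm g - g ∈ mIdeal k n ^ c j := by
    intro j
    apply aut_sub (φ j).symm (c j)
    intro i
    have h1 := aut_pow (φ j).symm (c j) _ (hφ j i)
    rw [map_sub, AlgEquiv.symm_apply_apply] at h1
    have hrw : (φ j).symm (X i) - X i = -(X i - (φ j).symm (X i)) := by ring
    rw [hrw]
    exact neg_mem h1
  set B : ℕ → MvPowerSeries (Fin n) k → MvPowerSeries (Fin n) k
    := fun j => ⇑(A j).symm with hB
  have hBsucc : ∀ j h, B (j + 1) h = B j ((φ (j + 1)).symm h) := by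
    intro j h
    apply (A (j + 1)).injective
    rw [AlgEquiv.apply_symm_apply, hAsucc, hB]
    simp only [AlgEquiv.apply_symm_apply]
  have hstepB : ∀ j h, B (j + 1) h - B j h ∈ mIdeal k n ^ c (j + 1) := by
    intro j h
    rw [hBsucc]
    have h1 : (φ (j + 1)).symm h - h ∈ mIdeal k n ^ c (j + 1) := hstepX' (j + 1) h
    have h2 := aut_pow (A j).symm (c (j + 1)) _ h1
    rw [map_sub] at h2
    exact h2
  obtain ⟨M, hM⟩ := limit c B hstepB Jf hJf
  have key : ∀ a b : MvPowerSeries (Fin n) k,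
      (∀ N, a - b ∈ mIdeal k n ^ N) → a = b := fun a b h => eq_of_forall_sub_mem h
  have hLinv : ∀ h, M (L h) = h := by
    intro h
    apply key
    intro N
    have e1 : B (Jf N) (L h) - M (L h) ∈ mIdeal k n ^ N := hM N (Jf N) le_rfl (L h)
    have e2 : L h - A (Jf N) h ∈ mIdeal k n ^ N := by
      have := hL N (Jf N) le_rfl h
      have h' := neg_mem this
      rwa [neg_sub] at h'
    have e3 : B (Jf N) (L h) - B (Jf N) (A (Jf N) h) ∈ mIdeal k n ^ N := by
      have h2 := aut_pow (A (Jf N)).symm N _ e2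
      rw [map_sub] at h2
      exact h2
    have e4 : B (Jf N) (A (Jf N) h) = h := (A (Jf N)).symm_apply_apply h
    have hrw : M (L h) - h
        = (B (Jf N) (L h) - B (Jf N) (A (Jf N) h)) - (B (Jf N) (L h) - M (L h)) := by
      rw [e4]; ring
    rw [hrw]
    exact sub_mem e3 e1
  have hRinv : ∀ h, L (M h) = h := by
    intro h
    apply key
    intro N
    have e1 : A (Jf N) (M h) - L (M h) ∈ mIdeal k n ^ N := hL N (Jf N) le_rfl (M h)
    have e2 : M h - B (Jf N) h ∈ mIdeal k n ^ N := by
      have := hM N (Jf N) le_rfl h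
      have h' := neg_mem this
      rwa [neg_sub] at h'
    have e3 : A (Jf N) (M h) - A (Jf N) (B (Jf N) h) ∈ mIdeal k n ^ N := by
      have h2 := aut_pow (A (Jf N)) N _ e2
      rw [map_sub] at h2
      exact h2
    have e4 : A (Jf N) (B (Jf N) h) = h := (A (Jf N)).apply_symm_apply h
    have hrw : L (M h) - h
        = (A (Jf N) (M h) - A (Jf N) (B (Jf N) h)) - (A (Jf N) (M h) - L (M h)) := by
      rw [e4]; ring
    rw [hrw]
    exact sub_mem e3 e1
  have hadd : ∀ a b, L (a + b) = L a + L b := by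
    intro a b
    apply key
    intro N
    have e1 : A (Jf N) (a + b) - L (a + b) ∈ mIdeal k n ^ N := hL N (Jf N) le_rfl _
    have e2 : A (Jf N) a - L a ∈ mIdeal k n ^ N := hL N (Jf N) le_rfl _
    have e3 : A (Jf N) b - L b ∈ mIdeal k n ^ N := hL N (Jf N) le_rfl _
    have hrw : L (a + b) - (L a + L b)
        = -(A (Jf N) (a + b) - L (a + b)) + (A (Jf N) a - L a) + (A (Jf N) b - L b) := by
      rw [map_add]; ring
    rw [hrw]
    exact add_mem (add_mem (neg_mem e1) e2) e3
  have hmul : ∀ a b, L (a * b) = L a * L b := by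
    intro a b
    apply key
    intro N
    have e1 : A (Jf N) (a * b) - L (a * b) ∈ mIdeal k n ^ N := hL N (Jf N) le_rfl _
    have e2 : A (Jf N) a - L a ∈ mIdeal k n ^ N := hL N (Jf N) le_rfl _
    have e3 : A (Jf N) b - L b ∈ mIdeal k n ^ N := hL N (Jf N) le_rfl _
    have hrw : L (a * b) - L a * L b
        = -(A (Jf N) (a * b) - L (a * b)) + A (Jf N) a * (A (Jf N) b - L b)
          + (A (Jf N) a - L a) * L b := by
      rw [map_mul]; ring
    rw [hrw]
    exact add_mem (add_mem (neg_mem e1) (Ideal.mul_mem_left _ _ e3))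
      (Ideal.mul_mem_right _ _ e2)
  have hcomm : ∀ r : k, L (algebraMap k (MvPowerSeries (Fin n) k) r)
      = algebraMap k (MvPowerSeries (Fin n) k) r := by
    intro r
    apply key
    intro N
    have e1 := hL N (Jf N) le_rfl (algebraMap k (MvPowerSeries (Fin n) k) r)
    rw [(A (Jf N)).commutes] at e1
    have h' := neg_mem e1
    rwa [neg_sub] at h'
  refine ⟨{ toFun := L, invFun := M, left_inv := hLinv, right_inv := hRinv,
            map_mul' := hmul, map_add' := hadd, commutes' := hcomm }, ?_⟩
  intro h N
  refine ⟨Jf N, fun j hj => ?_⟩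
  rw [comps_eq]
  exact hL N j hj h
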